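/- Let n, r be natural numbers with r odd and 1 ≤ r ≤ n. Then the maximal dimension of a linear subspace of the complex symmetric n×n matrices in which every nonzero matrix has rank r equals 1. That is: there exists such a subspace of dimension 1, and every linear subspace of complex symmetric n×n matrices in which every nonzero matrix has rank r has dimension at most 1. -/

import Mathlib

open Matrix Polynomial Module

lemma aux_select {ι V : Type*} [Fintype ι] [AddCommGroup V] [Module ℂ V] [FiniteDimensional ℂ V]
    (v : ι → V) (r : ℕ) (h : r ≤ Module.finrank ℂ (Submodule.span ℂ (Set.range v))) :
    ∃ g : Fin r → ι, LinearIndependent ℂ (v ∘ g) := by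
  classical
  obtain ⟨t, hts, hspan, hind⟩ := exists_linearIndependent ℂ (Set.range v)
  have htfin : t.Finite := hind.setFinite
  haveI : Fintype t := htfin.fintype
  have hcard : r ≤ Fintype.card t := by
    have h2 := finrank_span_set_eq_card hind
    rw [hspan] at h2
    rw [Set.toFinset_card] at h2
    omega
  let emb : Fin r ↪ t := (Fin.castLEEmb hcard).trans (Fintype.equivFin t).symm.toEmbedding
  have hmem : ∀ i : Fin r, ((emb i : V) ∈ Set.range v) := fun i => hts (emb i).2
  choose g hg using fun i => hmem i
  refine ⟨g, ?_⟩
  have : v ∘ g = (fun x : t => (x : V)) ∘ emb := by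
    funext i; simp [Function.comp, hg i]
  rw [this]
  exact hind.comp emb emb.injective

lemma aux_minor {n r : ℕ} (M : Matrix (Fin n) (Fin n) ℂ) (h : r ≤ M.rank) :
    ∃ f g : Fin r → Fin n, (M.submatrix f g).det ≠ 0 := by
  classical
  have hc : r ≤ Module.finrank ℂ (Submodule.span ℂ (Set.range Mᵀ)) := by
    rw [Matrix.rank_eq_finrank_span_cols] at h; exact h
  obtain ⟨g, hg⟩ := aux_select Mᵀ r hc
  set N : Matrix (Fin n) (Fin r) ℂ := M.submatrix id g with hN
  have hNt : Nᵀ = Mᵀ ∘ g := by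
    ext j i; simp [hN]; rfl
  have hrankN : N.rank = r := by
    rw [Matrix.rank_eq_finrank_span_cols, show N.col = Nᵀ from rfl, hNt, finrank_span_eq_card hg, Fintype.card_fin]
  have hrows : r ≤ Module.finrank ℂ (Submodule.span ℂ (Set.range (fun i : Fin n => N i))) := by
    have h1 : Nᵀ.rank = r := by rw [Matrix.rank_transpose, hrankN]
    have h2 := Matrix.rank_eq_finrank_span_cols Nᵀ
    rw [h1] at h2
    exact le_of_eq h2
  obtain ⟨f, hf⟩ := aux_select (fun i : Fin n => N i) r hrows
  refine ⟨f, g, ?_⟩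
  have hS : LinearIndependent ℂ (fun i : Fin r => (M.submatrix f g) i) := by
    have : (fun i : Fin r => (M.submatrix f g) i) = (fun i : Fin n => N i) ∘ f := by
      ext i j; simp [hN]
    rwa [this]
  have hu : IsUnit (M.submatrix f g) := Matrix.linearIndependent_rows_iff_isUnit.mp hS
  have := (Matrix.isUnit_iff_isUnit_det _).mp hu
  exact this.ne_zero

lemma aux_factor {n r : ℕ} (M : Matrix (Fin n) (Fin n) ℂ) (h : M.rank ≤ r) :
    ∃ (P : Matrix (Fin n) (Fin r) ℂ) (Q : Matrix (Fin r) (Fin n) ℂ), M = P * Q := by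
  classical
  set W := LinearMap.range M.mulVecLin with hWdef
  have hW : Module.finrank ℂ W ≤ r := h
  set k := Module.finrank ℂ W with hk
  let b : Basis (Fin k) ℂ W := Module.finBasis ℂ W
  let v : Fin r → W := fun j => if hj : (j : ℕ) < k then b ⟨j, hj⟩ else 0
  let σ : (Fin r → ℂ) →ₗ[ℂ] W := (Pi.basisFun ℂ (Fin r)).constr ℂ v
  have hσ : Function.Surjective σ := by
    rw [← LinearMap.range_eq_top, ← top_le_iff, ← b.span_eq, Submodule.span_le]
    rintro x ⟨i, rfl⟩
    refine ⟨Pi.basisFun ℂ (Fin r) ⟨i, lt_of_lt_of_le i.2 hW⟩, ?_⟩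
    simp only [σ, Basis.constr_basis, v]
    rw [dif_pos i.2]
  obtain ⟨q, hq⟩ := Module.projective_lifting_property σ M.mulVecLin.rangeRestrict hσ
  refine ⟨LinearMap.toMatrix' (W.subtype.comp σ), LinearMap.toMatrix' q, ?_⟩
  have hM : M.mulVecLin = (W.subtype.comp σ).comp q := by
    rw [LinearMap.comp_assoc, hq]
    ext x
    rfl
  rw [← LinearMap.toMatrix'_comp, ← hM]
  rw [← Matrix.toLin'_apply', LinearMap.toMatrix'_toLin']

lemma two_indep_contradiction {n r : ℕ} (hrodd : Odd r)
    (A B : Matrix (Fin n) (Fin n) ℂ) (hA : A.IsSymm) (hB : B.IsSymm)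
    (hrank : ∀ c : ℂ, (A + c • B).rank = r) (hBrank : B.rank = r) : False := by
  classical
  set MP : Matrix (Fin n) (Fin n) (Polynomial ℂ) := A.map C + (X : ℂ[X]) • B.map C with hMP
  set p : (Fin r → Fin n) → (Fin r → Fin n) → ℂ[X] :=
    fun f g => (MP.submatrix f g).det with hp
  -- evaluation
  have heval : ∀ (c : ℂ) f g, (p f g).eval c = ((A + c • B).submatrix f g).det := by
    intro c f g
    have h1 := RingHom.map_det (evalRingHom c) (MP.submatrix f g)
    have h2 : (MP.submatrix f g).map (evalRingHom c) = (A + c • B).submatrix f g := by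
      ext i j
      simp only [hMP, Matrix.map_apply, Matrix.submatrix_apply, Matrix.add_apply,
        Matrix.smul_apply, smul_eq_mul, coe_evalRingHom, eval_add, eval_C, eval_mul, eval_X]
    calc (p f g).eval c = evalRingHom c (MP.submatrix f g).det := rfl
      _ = ((MP.submatrix f g).map (evalRingHom c)).det := h1
      _ = ((A + c • B).submatrix f g).det := by rw [h2]
  -- degree bound
  have hentry : ∀ (f g : Fin r → Fin n) i j, ((MP.submatrix f g) i j).natDegree ≤ 1 := by
    intro f g i j
    simp only [hMP, Matrix.submatrix_apply, Matrix.add_apply, Matrix.smul_apply, Matrix.map_apply,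
      smul_eq_mul]
    compute_degree
  have hdeg : ∀ f g, (p f g).natDegree ≤ r := by
    intro f g
    show ((MP.submatrix f g).det).natDegree ≤ r
    rw [Matrix.det_apply']
    refine Polynomial.natDegree_sum_le_of_forall_le _ _ ?_
    intro σ _
    refine le_trans (Polynomial.natDegree_mul_le) ?_
    rw [Polynomial.natDegree_intCast, zero_add]
    refine le_trans (Polynomial.natDegree_prod_le _ _) ?_
    calc ∑ i : Fin r, ((MP.submatrix f g) (σ i) i).natDegree ≤ ∑ _i : Fin r, 1 :=
          Finset.sum_le_sum (fun i _ => hentry f g (σ i) i)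
      _ = r := by simp
  -- top coefficient
  have hcoeff : ∀ f g, (p f g).coeff r = (B.submatrix f g).det := by
    intro f g
    show ((MP.submatrix f g).det).coeff r = (B.submatrix f g).det
    rw [Matrix.det_apply', Matrix.det_apply', Polynomial.finset_sum_coeff]
    congr 1
    funext σ
    rw [Polynomial.coeff_intCast_mul]
    congr 1
    have : ∀ i : Fin r, ((MP.submatrix f g) (σ i) i).coeff 1 = (B.submatrix f g) (σ i) i := by
      intro i
      simp [hMP, Matrix.submatrix_apply, Matrix.add_apply, Matrix.smul_apply, smul_eq_mul,
        Polynomial.coeff_add, Polynomial.coeff_C, Polynomial.coeff_X_mul]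
    have hcp := Polynomial.coeff_prod_of_natDegree_le (s := (Finset.univ : Finset (Fin r)))
      (fun i => (MP.submatrix f g) (σ i) i) 1 (fun i _ => hentry f g (σ i) i)
    simp only [Finset.card_univ, Fintype.card_fin, mul_one] at hcp
    rw [hcp]
    exact Finset.prod_congr rfl (fun i _ => this i)
  -- symmetry
  have hMPs : MPᵀ = MP := by
    ext i j
    simp only [hMP, Matrix.transpose_apply, Matrix.add_apply, Matrix.smul_apply,
      Matrix.map_apply]
    rw [hA.apply, hB.apply]
  have hsym : ∀ f g, p f g = p g f := by
    intro f g
    calc p f g = ((MP.submatrix g f)ᵀ).det := by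
          rw [Matrix.transpose_submatrix, hMPs]
      _ = p g f := Matrix.det_transpose _
  -- the 2x2 minor identity
  have hid : ∀ f g f' g', p f g * p f' g' = p f g' * p f' g := by
    intro f g f' g'
    apply Polynomial.funext
    intro c
    simp only [Polynomial.eval_mul, heval]
    have hle : (A + c • B).rank ≤ r := le_of_eq (hrank c)
    obtain ⟨P, Q, hPQ⟩ := aux_factor (A + c • B) hle
    have hsub : ∀ (f g : Fin r → Fin n), ((A + c • B).submatrix f g).det =
        (P.submatrix f id).det * (Q.submatrix id g).det := by
      intro f g
      rw [hPQ, Matrix.submatrix_mul P Q f id g Function.bijective_id, Matrix.det_mul]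
    rw [hsub f g, hsub f' g', hsub f g', hsub f' g]
    ring
  have hsq : ∀ f g, p f g * p f g = p f f * p g g := by
    intro f g
    have h1 := hid f g g f
    rwa [hsym g f] at h1
  -- a diagonal entry of degree r
  obtain ⟨f₁, g₁, hB1⟩ := aux_minor B (le_of_eq hBrank.symm)
  have h1 : (p f₁ g₁).coeff r ≠ 0 := by rw [hcoeff]; exact hB1
  have hd1 : (p f₁ g₁).natDegree = r :=
    le_antisymm (hdeg _ _) (Polynomial.le_natDegree_of_ne_zero h1)
  have hne1 : p f₁ g₁ ≠ 0 := fun h0 => h1 (by simp [h0])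
  set p₀ := p f₁ f₁ with hp₀
  have hprod1 : p f₁ g₁ * p f₁ g₁ = p₀ * p g₁ g₁ := hsq f₁ g₁
  have hmulne : p₀ * p g₁ g₁ ≠ 0 := by
    rw [← hprod1]; exact mul_ne_zero hne1 hne1
  have hp0ne : p₀ ≠ 0 := left_ne_zero_of_mul hmulne
  have hg1ne : p g₁ g₁ ≠ 0 := right_ne_zero_of_mul hmulne
  have hd0 : p₀.natDegree = r := by
    have hnd : (p f₁ g₁ * p f₁ g₁).natDegree = r + r := by
      rw [Polynomial.natDegree_mul hne1 hne1, hd1]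
    rw [hprod1, Polynomial.natDegree_mul hp0ne hg1ne] at hnd
    have := hdeg f₁ f₁
    have := hdeg g₁ g₁
    rw [← hp₀] at *
    omega
  -- a root of odd multiplicity
  have hsplit : p₀.roots.card = r := by
    rw [← hd0]
    exact IsAlgClosed.card_roots_eq_natDegree
  have hoddroot : ∃ c : ℂ, Odd (p₀.rootMultiplicity c) := by
    by_contra hall
    push_neg at hall
    simp only [Nat.not_odd_iff_even] at hall
    have : Even (p₀.roots.card) := by
      rw [← Multiset.toFinset_sum_count_eq]
      refine Finset.even_sum _ (fun a _ => ?_)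
      rw [Polynomial.count_roots]
      exact hall a
    rw [hsplit] at this
    exact (Nat.not_odd_iff_even.mpr this) hrodd
  obtain ⟨c, hcodd⟩ := hoddroot
  -- multiplicity facts
  have hmdiag : ∀ f, p f f ≠ 0 → Odd ((p f f).rootMultiplicity c) := by
    intro f hf
    have hs := hsq f f₁
    have hfne : p f f₁ ≠ 0 := by
      intro h0
      rw [h0, zero_mul] at hs
      rcases mul_eq_zero.mp hs.symm with h | h
      · exact hf h
      · exact hp0ne h
    have hrm := Polynomial.rootMultiplicity_mul (x := c) (mul_ne_zero hfne hfne)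
    rw [hs, Polynomial.rootMultiplicity_mul (x := c) (mul_ne_zero hf hp0ne)] at hrm
    obtain ⟨t, ht⟩ := hcodd
    refine Nat.odd_iff.mpr ?_
    omega
  -- all minors vanish at c
  have hzero : ∀ f g, (p f g).eval c = 0 := by
    intro f g
    by_cases h0 : p f g = 0
    · simp [h0]
    · have hs := hsq f g
      have hffne : p f f ≠ 0 := by
        intro hz; rw [hz, zero_mul] at hs; exact (mul_ne_zero h0 h0) hs
      have hggne : p g g ≠ 0 := by
        intro hz; rw [hz, mul_zero] at hs; exact (mul_ne_zero h0 h0) hs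
      have hrm := Polynomial.rootMultiplicity_mul (x := c) (mul_ne_zero h0 h0)
      rw [hs, Polynomial.rootMultiplicity_mul (x := c) (mul_ne_zero hffne hggne)] at hrm
      obtain ⟨t1, ht1⟩ := hmdiag f hffne
      obtain ⟨t2, ht2⟩ := hmdiag g hggne
      have hpos : 0 < (p f g).rootMultiplicity c := by omega
      exact (Polynomial.rootMultiplicity_pos h0).mp hpos
  obtain ⟨f, g, hfg⟩ := aux_minor (A + c • B) (le_of_eq (hrank c).symm)
  rw [← heval c f g] at hfg
  exact hfg (hzero f g)

open Matrix

/-- for `r` odd with `1 ≤ r ≤ n`, the maximal dimension of a linear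
subspace of the complex symmetric `n × n` matrices in which every nonzero matrix has
rank `r` equals `1`. -/
theorem stmt_16 (n r : ℕ) (hrodd : Odd r) (hr : 1 ≤ r) (hrn : r ≤ n) :
    (∃ L : Submodule ℂ (Matrix (Fin n) (Fin n) ℂ),
      (∀ A ∈ L, A.IsSymm) ∧ (∀ A ∈ L, A ≠ 0 → A.rank = r) ∧
      Module.finrank ℂ L = 1) ∧
    (∀ L : Submodule ℂ (Matrix (Fin n) (Fin n) ℂ),
      (∀ A ∈ L, A.IsSymm) → (∀ A ∈ L, A ≠ 0 → A.rank = r) →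
      Module.finrank ℂ L ≤ 1) := by
  classical
  constructor
  · -- existence
    set d : Fin n → ℂ := fun i => if (i : ℕ) < r then 1 else 0 with hd
    set D : Matrix (Fin n) (Fin n) ℂ := Matrix.diagonal d with hD
    have hcard : ∀ c : ℂ, c ≠ 0 → Fintype.card {i // (c • d) i ≠ 0} = r := by
      intro c hc
      have e1 : {i // (c • d) i ≠ 0} ≃ {i : Fin n // (i : ℕ) < r} := by
        refine Equiv.subtypeEquivRight ?_
        intro i
        simp only [Pi.smul_apply, smul_eq_mul, hd, ne_eq, mul_eq_zero, not_or]
        constructor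
        · rintro ⟨-, h2⟩
          by_contra hlt
          exact h2 (if_neg hlt)
        · intro hlt
          exact ⟨hc, by rw [if_pos hlt]; exact one_ne_zero⟩
      have e2 : {i : Fin n // (i : ℕ) < r} ≃ Fin r :=
        { toFun := fun x => ⟨x.1.1, x.2⟩
          invFun := fun y => ⟨⟨y.1, lt_of_lt_of_le y.2 hrn⟩, y.2⟩
          left_inv := fun x => by ext; rfl
          right_inv := fun y => by ext; rfl }
      rw [Fintype.card_congr (e1.trans e2), Fintype.card_fin]
    have hDne : D ≠ 0 := by
      intro h0
      have h1 : D ⟨0, lt_of_lt_of_le hr hrn⟩ ⟨0, lt_of_lt_of_le hr hrn⟩ = 0 := by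
        rw [h0]; rfl
      rw [hD, Matrix.diagonal_apply_eq, hd] at h1
      simp only [Fin.val_mk, hr, if_pos (lt_of_lt_of_le Nat.zero_lt_one hr)] at h1
      exact one_ne_zero h1
    refine ⟨Submodule.span ℂ {D}, ?_, ?_, finrank_span_singleton hDne⟩
    · intro A hA
      obtain ⟨c, rfl⟩ := Submodule.mem_span_singleton.mp hA
      exact (Matrix.isSymm_diagonal d).smul c
    · intro A hA hAne
      obtain ⟨c, rfl⟩ := Submodule.mem_span_singleton.mp hA
      have hc : c ≠ 0 := by rintro rfl; exact hAne (zero_smul _ _)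
      rw [hD, ← Matrix.diagonal_smul, Matrix.rank_diagonal, hcard c hc]
  · -- maximality
    intro L hLs hLr
    by_contra hgt
    push_neg at hgt
    obtain ⟨v, hv⟩ := exists_linearIndependent_of_le_finrank (R := ℂ) (M := L) hgt
    have hv' : LinearIndependent ℂ (fun i : Fin 2 => ((v i : Matrix (Fin n) (Fin n) ℂ))) :=
      hv.map' L.subtype (Submodule.ker_subtype L)
    rw [linearIndependent_fin2] at hv'
    obtain ⟨hB0, hAB⟩ := hv'
    refine two_indep_contradiction hrodd (v 0 : Matrix (Fin n) (Fin n) ℂ)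
      (v 1 : Matrix (Fin n) (Fin n) ℂ) (hLs _ (v 0).2) (hLs _ (v 1).2) ?_ ?_
    · intro c
      refine hLr _ (L.add_mem (v 0).2 (L.smul_mem c (v 1).2)) ?_
      intro h0
      exact hAB (-c) (by rw [neg_smul]; exact (eq_neg_of_add_eq_zero_left h0).symm)
    · exact hLr _ (v 1).2 hB0
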